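/- The probability density f_L(ℓ) = 2ℓ/R² for 0 < ℓ ≤ R - ‖v₀‖ and f_L(ℓ) = (2ℓ/(πR²)) · arccos((‖v₀‖² - R² + ℓ²)/(2ℓ‖v₀‖)) for R - ‖v₀‖ < ℓ ≤ R + ‖v₀‖ integrates to 1, i.e., it is a valid probability density on (0, R + ‖v₀‖]. -/

import Mathlib

open MeasureTheory Real Set
set_option maxHeartbeats 1000000

noncomputable def lensF (R d x : ℝ) : ℝ :=
  x ^ 2 * Real.arccos ((d ^ 2 - R ^ 2 + x ^ 2) / (2 * x * d))
    + R ^ 2 * Real.arccos ((d ^ 2 + R ^ 2 - x ^ 2) / (2 * d * R))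
    - Real.sqrt (4 * d ^ 2 * x ^ 2 - (d ^ 2 - R ^ 2 + x ^ 2) ^ 2) / 2

lemma lensF_hasDerivAt (R d : ℝ) (hd : 0 < d) (hdR : d < R) {x : ℝ}
    (hx1 : R - d < x) (hx2 : x < R + d) :
    HasDerivAt (lensF R d)
      (2 * x * Real.arccos ((d ^ 2 - R ^ 2 + x ^ 2) / (2 * x * d))) x := by
  have hx0 : 0 < x := lt_trans (by linarith) hx1
  have hxne : x ≠ 0 := ne_of_gt hx0
  have hdxpos : 0 < 2 * x * d := by nlinarith
  have hdx : (2 * x * d) ≠ 0 := ne_of_gt hdxpos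
  have hdRpos : 0 < 2 * d * R := by nlinarith
  have hdR0 : (2 * d * R) ≠ 0 := ne_of_gt hdRpos
  set P : ℝ := 4 * d ^ 2 * x ^ 2 - (d ^ 2 - R ^ 2 + x ^ 2) ^ 2 with hPdef
  have hPfac : P = ((R + d) ^ 2 - x ^ 2) * (x ^ 2 - (R - d) ^ 2) := by rw [hPdef]; ring
  have hP : 0 < P := by
    rw [hPfac]
    have h1 : x ^ 2 < (R + d) ^ 2 := by nlinarith
    have h2 : (R - d) ^ 2 < x ^ 2 := by nlinarith
    exact mul_pos (by linarith) (by linarith)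
  set s : ℝ := Real.sqrt P with hsdef
  have hs0 : 0 < s := Real.sqrt_pos.2 hP
  have hs2 : s ^ 2 = P := Real.sq_sqrt hP.le
  set u : ℝ := (d ^ 2 - R ^ 2 + x ^ 2) / (2 * x * d) with hudef
  set w : ℝ := (d ^ 2 + R ^ 2 - x ^ 2) / (2 * d * R) with hwdef
  have hu2 : 1 - u ^ 2 = P / (2 * x * d) ^ 2 := by
    rw [hudef, hPdef]; field_simp; ring
  have hw2 : 1 - w ^ 2 = P / (2 * d * R) ^ 2 := by
    have hRne0 : R ≠ 0 := by nlinarith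
    rw [hwdef, hPdef]; field_simp; ring
  have hu2pos : 0 < 1 - u ^ 2 := by rw [hu2]; positivity
  have hw2pos : 0 < 1 - w ^ 2 := by rw [hw2]; positivity
  have hsu : Real.sqrt (1 - u ^ 2) = s / (2 * x * d) := by
    rw [hu2, hsdef, Real.sqrt_div hP.le, Real.sqrt_sq hdxpos.le]
  have hsw : Real.sqrt (1 - w ^ 2) = s / (2 * d * R) := by
    rw [hw2, hsdef, Real.sqrt_div hP.le, Real.sqrt_sq hdRpos.le]
  have hune1 : u ≠ -1 := by
    intro h; rw [h] at hu2pos; norm_num at hu2pos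
  have hune2 : u ≠ 1 := by
    intro h; rw [h] at hu2pos; norm_num at hu2pos
  have hwne1 : w ≠ -1 := by
    intro h; rw [h] at hw2pos; norm_num at hw2pos
  have hwne2 : w ≠ 1 := by
    intro h; rw [h] at hw2pos; norm_num at hw2pos
  -- derivative of u
  have hnum : HasDerivAt (fun y : ℝ => d ^ 2 - R ^ 2 + y ^ 2) (2 * x) x := by
    simpa using (hasDerivAt_pow 2 x).const_add (d ^ 2 - R ^ 2)
  have hden : HasDerivAt (fun y : ℝ => 2 * y * d) (2 * d) x := by
    simpa using ((hasDerivAt_id x).const_mul 2).mul_const d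
  have hu' : HasDerivAt (fun y : ℝ => (d ^ 2 - R ^ 2 + y ^ 2) / (2 * y * d))
      ((2 * x * (2 * x * d) - (d ^ 2 - R ^ 2 + x ^ 2) * (2 * d)) / (2 * x * d) ^ 2) x :=
    hnum.div hden hdx
  have harcu : HasDerivAt (fun y : ℝ => Real.arccos ((d ^ 2 - R ^ 2 + y ^ 2) / (2 * y * d)))
      (-(1 / Real.sqrt (1 - u ^ 2)) *
        ((2 * x * (2 * x * d) - (d ^ 2 - R ^ 2 + x ^ 2) * (2 * d)) / (2 * x * d) ^ 2)) x :=
    by have := (Real.hasDerivAt_arccos hune1 hune2).comp x hu'; exact this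
  have hA : HasDerivAt (fun y : ℝ => y ^ 2 * Real.arccos ((d ^ 2 - R ^ 2 + y ^ 2) / (2 * y * d)))
      (2 * x * Real.arccos u + x ^ 2 * (-(1 / Real.sqrt (1 - u ^ 2)) *
        ((2 * x * (2 * x * d) - (d ^ 2 - R ^ 2 + x ^ 2) * (2 * d)) / (2 * x * d) ^ 2))) x := by
    simpa using (hasDerivAt_pow 2 x).fun_mul harcu
  -- derivative of w part
  have hw' : HasDerivAt (fun y : ℝ => (d ^ 2 + R ^ 2 - y ^ 2) / (2 * d * R))
      ((-(2 * x)) / (2 * d * R)) x := by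
    have : HasDerivAt (fun y : ℝ => d ^ 2 + R ^ 2 - y ^ 2) (-(2 * x)) x := by
      simpa using (hasDerivAt_const x (d ^ 2 + R ^ 2)).fun_sub (hasDerivAt_pow 2 x)
    exact this.div_const _
  have hB : HasDerivAt (fun y : ℝ => R ^ 2 * Real.arccos ((d ^ 2 + R ^ 2 - y ^ 2) / (2 * d * R)))
      (R ^ 2 * (-(1 / Real.sqrt (1 - w ^ 2)) * ((-(2 * x)) / (2 * d * R)))) x :=
    (((Real.hasDerivAt_arccos hwne1 hwne2).comp x hw')).const_mul (R ^ 2)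
  -- derivative of sqrt part
  have hPder : HasDerivAt (fun y : ℝ => 4 * d ^ 2 * y ^ 2 - (d ^ 2 - R ^ 2 + y ^ 2) ^ 2)
      (4 * d ^ 2 * (2 * x) - 2 * (d ^ 2 - R ^ 2 + x ^ 2) * (2 * x)) x := by
    have h1 : HasDerivAt (fun y : ℝ => 4 * d ^ 2 * y ^ 2) (4 * d ^ 2 * (2 * x)) x := by
      simpa using (hasDerivAt_pow 2 x).const_mul (4 * d ^ 2)
    have h2 : HasDerivAt (fun y : ℝ => (d ^ 2 - R ^ 2 + y ^ 2) ^ 2)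
        (2 * (d ^ 2 - R ^ 2 + x ^ 2) * (2 * x)) x := by
      simpa [mul_comm, mul_assoc, mul_left_comm] using hnum.fun_pow 2
    exact h1.sub h2
  have hC : HasDerivAt
      (fun y : ℝ => Real.sqrt (4 * d ^ 2 * y ^ 2 - (d ^ 2 - R ^ 2 + y ^ 2) ^ 2) / 2)
      (((4 * d ^ 2 * (2 * x) - 2 * (d ^ 2 - R ^ 2 + x ^ 2) * (2 * x)) / (2 * s)) / 2) x :=
    (hPder.sqrt (by rw [← hPdef]; exact hP.ne')).div_const 2
  have htot := (hA.add hB).sub hC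
  have heq : 2 * x * Real.arccos u + x ^ 2 * (-(1 / Real.sqrt (1 - u ^ 2)) *
        ((2 * x * (2 * x * d) - (d ^ 2 - R ^ 2 + x ^ 2) * (2 * d)) / (2 * x * d) ^ 2))
      + R ^ 2 * (-(1 / Real.sqrt (1 - w ^ 2)) * ((-(2 * x)) / (2 * d * R)))
      - ((4 * d ^ 2 * (2 * x) - 2 * (d ^ 2 - R ^ 2 + x ^ 2) * (2 * x)) / (2 * s)) / 2
      = 2 * x * Real.arccos u := by
    rw [hsu, hsw]
    have hRne : (R : ℝ) ≠ 0 := ne_of_gt (lt_trans hd hdR)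
    have hdne : (d : ℝ) ≠ 0 := hd.ne'
    field_simp
    nlinarith [hs2, hs0, sq_nonneg s]
  rw [heq] at htot
  unfold lensF
  exact htot

lemma lensF_continuousOn (R d : ℝ) (hd : 0 < d) (hdR : d < R) :
    ContinuousOn (lensF R d) (Icc (R - d) (R + d)) := by
  have hx0 : ∀ x ∈ Icc (R - d) (R + d), 2 * x * d ≠ 0 := by
    intro x hx
    have : 0 < x := lt_of_lt_of_le (by linarith) hx.1
    nlinarith
  unfold lensF
  apply ContinuousOn.sub
  · apply ContinuousOn.add
    · exact (continuousOn_pow 2).mul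
        (Real.continuous_arccos.comp_continuousOn
          ((by fun_prop : ContinuousOn (fun x : ℝ => d ^ 2 - R ^ 2 + x ^ 2) _).div
            (by fun_prop) hx0))
    · exact continuousOn_const.mul
        (Real.continuous_arccos.comp_continuousOn (by fun_prop))
  · exact ((Real.continuous_sqrt.comp_continuousOn (by fun_prop))).div_const 2

lemma integrand_continuousOn (R d : ℝ) (hd : 0 < d) (hdR : d < R) :
    ContinuousOn (fun x : ℝ => 2 * x * Real.arccos ((d ^ 2 - R ^ 2 + x ^ 2) / (2 * x * d)))
      (Icc (R - d) (R + d)) := by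
  have hx0 : ∀ x ∈ Icc (R - d) (R + d), 2 * x * d ≠ 0 := by
    intro x hx
    have : 0 < x := lt_of_lt_of_le (by linarith) hx.1
    nlinarith
  exact (by fun_prop : ContinuousOn (fun x : ℝ => 2 * x) _).mul
    (Real.continuous_arccos.comp_continuousOn
      ((by fun_prop : ContinuousOn (fun x : ℝ => d ^ 2 - R ^ 2 + x ^ 2) _).div
        (by fun_prop) hx0))

lemma key_integral (R d : ℝ) (hd : 0 < d) (hdR : d < R) :
    ∫ x in (R - d)..(R + d), 2 * x * Real.arccos ((d ^ 2 - R ^ 2 + x ^ 2) / (2 * x * d))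
      = π * R ^ 2 - π * (R - d) ^ 2 := by
  have hab : R - d ≤ R + d := by linarith
  have hFTC := intervalIntegral.integral_eq_sub_of_hasDeriv_right_of_le hab
    (lensF_continuousOn R d hd hdR)
    (fun x hx => ((lensF_hasDerivAt R d hd hdR hx.1 hx.2).hasDerivWithinAt))
    (((integrand_continuousOn R d hd hdR).mono (by rw [uIcc_of_le hab])).intervalIntegrable)
  rw [hFTC]
  have hRd0 : (0:ℝ) < R - d := by linarith
  have e1 : (d ^ 2 - R ^ 2 + (R + d) ^ 2) / (2 * (R + d) * d) = 1 := by
    rw [div_eq_one_iff_eq (by nlinarith)]; ring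
  have e2 : (d ^ 2 + R ^ 2 - (R + d) ^ 2) / (2 * d * R) = -1 := by
    rw [div_eq_iff (by nlinarith)]; ring
  have e3 : (d ^ 2 - R ^ 2 + (R - d) ^ 2) / (2 * (R - d) * d) = -1 := by
    rw [div_eq_iff (by nlinarith)]; ring
  have e4 : (d ^ 2 + R ^ 2 - (R - d) ^ 2) / (2 * d * R) = 1 := by
    rw [div_eq_one_iff_eq (by nlinarith)]; ring
  have e5 : 4 * d ^ 2 * (R + d) ^ 2 - (d ^ 2 - R ^ 2 + (R + d) ^ 2) ^ 2 = 0 := by ring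
  have e6 : 4 * d ^ 2 * (R - d) ^ 2 - (d ^ 2 - R ^ 2 + (R - d) ^ 2) ^ 2 = 0 := by ring
  unfold lensF
  rw [e1, e2, e3, e4, e5, e6, Real.arccos_one, Real.arccos_neg_one, Real.sqrt_zero]
  ring

lemma key_total (R d : ℝ) (hd : 0 < d) (hdR : d < R) :
    ∫ ℓ in Ioc (0:ℝ) (R + d),
        (if ℓ ≤ R - d then 2 * ℓ / R ^ 2
         else 2 * ℓ * Real.arccos ((d ^ 2 - R ^ 2 + ℓ ^ 2) / (2 * ℓ * d))
                / (Real.pi * R ^ 2))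
      = 1 := by
  have hRd0 : (0:ℝ) < R - d := by linarith
  have hR : (0:ℝ) < R := lt_trans hd hdR
  set f : ℝ → ℝ := fun ℓ =>
    if ℓ ≤ R - d then 2 * ℓ / R ^ 2
    else 2 * ℓ * Real.arccos ((d ^ 2 - R ^ 2 + ℓ ^ 2) / (2 * ℓ * d)) / (Real.pi * R ^ 2)
    with hfdef
  have hEq1 : EqOn (fun ℓ : ℝ => 2 * ℓ / R ^ 2) f (Ioc 0 (R - d)) := by
    intro x hx
    simp only [hfdef, if_pos hx.2]
  have hEq2 : EqOn
      (fun ℓ : ℝ => 2 * ℓ * Real.arccos ((d ^ 2 - R ^ 2 + ℓ ^ 2) / (2 * ℓ * d))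
        / (Real.pi * R ^ 2)) f (Ioc (R - d) (R + d)) := by
    intro x hx
    simp only [hfdef, if_neg (not_le.2 hx.1)]
  have hint1 : IntegrableOn f (Ioc 0 (R - d)) := by
    refine IntegrableOn.congr_fun ?_ hEq1 measurableSet_Ioc
    exact (Continuous.integrableOn_Ioc (by fun_prop))
  have hint2 : IntegrableOn f (Ioc (R - d) (R + d)) := by
    refine IntegrableOn.congr_fun ?_ hEq2 measurableSet_Ioc
    refine IntegrableOn.mono_set ?_ Ioc_subset_Icc_self
    exact (((integrand_continuousOn R d hd hdR).div_const _).integrableOn_Icc)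
  rw [← Ioc_union_Ioc_eq_Ioc hRd0.le (by linarith : R - d ≤ R + d),
    setIntegral_union (Ioc_disjoint_Ioc_of_le le_rfl) measurableSet_Ioc hint1 hint2]
  have h1 : ∫ ℓ in Ioc (0:ℝ) (R - d), f ℓ = (R - d) ^ 2 / R ^ 2 := by
    rw [← setIntegral_congr_fun measurableSet_Ioc hEq1,
      ← intervalIntegral.integral_of_le hRd0.le]
    have hderiv : ∀ x ∈ uIcc (0:ℝ) (R - d),
        HasDerivAt (fun y : ℝ => y ^ 2 / R ^ 2) (2 * x / R ^ 2) x := by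
      intro x _
      simpa using (hasDerivAt_pow 2 x).div_const (R ^ 2)
    rw [intervalIntegral.integral_eq_sub_of_hasDerivAt (fun x hx => hderiv x hx)
      ((by fun_prop : Continuous fun x : ℝ => 2 * x / R ^ 2).intervalIntegrable _ _)]
    simp
  have h2 : ∫ ℓ in Ioc (R - d) (R + d), f ℓ = (π * R ^ 2 - π * (R - d) ^ 2) / (π * R ^ 2) := by
    rw [← setIntegral_congr_fun measurableSet_Ioc hEq2,
      ← intervalIntegral.integral_of_le (by linarith : R - d ≤ R + d),
      intervalIntegral.integral_div, key_integral R d hd hdR]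
  rw [h1, h2]
  have hπ : (π : ℝ) ≠ 0 := Real.pi_ne_zero
  field_simp
  ring

/-- The density `f_L(ℓ) = 2ℓ/R²` for `0 < ℓ ≤ R - ‖v₀‖`, and
`f_L(ℓ) = (2ℓ/(πR²)) arccos((‖v₀‖² - R² + ℓ²)/(2ℓ‖v₀‖))` for
`R - ‖v₀‖ < ℓ ≤ R + ‖v₀‖`, integrates to `1` on `(0, R + ‖v₀‖]`. -/
theorem distance_density_integrates_to_one
    (R : ℝ) (hR : 0 < R) (v₀ : EuclideanSpace ℝ (Fin 2))
    (hv₀ : 0 < ‖v₀‖) (hv₀R : ‖v₀‖ < R) :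
    ∫ ℓ in Ioc (0:ℝ) (R + ‖v₀‖),
        (if ℓ ≤ R - ‖v₀‖ then 2 * ℓ / R ^ 2
         else 2 * ℓ * Real.arccos ((‖v₀‖ ^ 2 - R ^ 2 + ℓ ^ 2) / (2 * ℓ * ‖v₀‖))
                / (Real.pi * R ^ 2))
      = 1 := by
  exact key_total R ‖v₀‖ hv₀ hv₀R
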